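/- Let a := tr(Υ·M) and b := τᵀ·P·τ, and let R(ω) := E[‖Γ₁(ξ+τ) − ω·(Γ₁−Γ)(ξ+τ)‖²_Υ]. If a > 0, then R restricted to the interval [0,1] attains its minimum uniquely at ω* = a / (a + b), and ω* ∈ (0, 1]. If a ≤ 0, then R restricted to [0,1] attains its minimum at ω = 0. -/

import Mathlib

open Matrix MeasureTheory ProbabilityTheory

/-- The standard Gaussian measure on `ℝ^m` (iid standard normal coordinates). -/
noncomputable def stdGaussian (m : ℕ) : Measure (Fin m → ℝ) :=
  Measure.pi fun _ => gaussianReal 0 1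

/-- `μ` is the multivariate Gaussian law on `ℝ^m` with mean `mean` and covariance
matrix `V`, i.e. the law of `mean + A ζ` for a standard Gaussian `ζ` and any matrix
`A` with `A Aᵀ = V`. -/
def IsGaussianLaw {m : ℕ} (μ : Measure (Fin m → ℝ)) (mean : Fin m → ℝ)
    (V : Matrix (Fin m) (Fin m) ℝ) : Prop :=
  ∃ A : Matrix (Fin m) (Fin m) ℝ, A * Aᵀ = V ∧
    μ = Measure.map (fun x => mean + A.mulVec x) (stdGaussian m)

section Auxiliary

open Real Filter
open scoped ENNReal NNReal

/- ### One-dimensional Gaussian moment computations -/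

lemma sm9_pdf01 : gaussianPDFReal 0 1
    = fun x => (Real.sqrt (2*π))⁻¹ * Real.exp (-(1/2) * x^2) := by
  funext x
  rw [gaussianPDFReal]
  norm_num
  exact Or.inl (by ring)

lemma sm9_gauss_integral_eq (g : ℝ → ℝ) :
    ∫ x, g x ∂(gaussianReal 0 1) = ∫ x, gaussianPDFReal 0 1 x * g x := by
  rw [gaussianReal_of_var_ne_zero 0 one_ne_zero]
  rw [show (gaussianPDF 0 1) = (fun x => ((gaussianPDFReal 0 1 x).toNNReal : ℝ≥0∞)) from rfl]
  rw [integral_withDensity_eq_integral_smul ((measurable_gaussianPDFReal 0 1).real_toNNReal) g]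
  congr 1; funext x
  simp [NNReal.smul_def, Real.coe_toNNReal _ (gaussianPDFReal_nonneg 0 1 x)]

lemma sm9_gauss_integrable_iff (g : ℝ → ℝ) :
    Integrable g (gaussianReal 0 1)
      ↔ Integrable (fun x => gaussianPDFReal 0 1 x * g x) volume := by
  rw [gaussianReal_of_var_ne_zero 0 one_ne_zero]
  rw [show (gaussianPDF 0 1) = (fun x => ((gaussianPDFReal 0 1 x).toNNReal : ℝ≥0∞)) from rfl]
  rw [integrable_withDensity_iff_integrable_smul ((measurable_gaussianPDFReal 0 1).real_toNNReal)]
  constructor <;> intro h <;> refine h.congr (ae_of_all _ fun x => ?_) <;>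
    simp [NNReal.smul_def, Real.coe_toNNReal _ (gaussianPDFReal_nonneg 0 1 x)]

lemma sm9_exp_integral : ∫ x : ℝ, Real.exp (-(1/2) * x^2) = Real.sqrt (2*π) := by
  rw [integral_gaussian, show π/(1/2:ℝ) = 2*π by ring]

lemma sm9_sqrt2pi_pos : 0 < Real.sqrt (2*π) := Real.sqrt_pos.2 (by positivity)

lemma sm9_gauss_integrable_id : Integrable (fun x : ℝ => x) (gaussianReal 0 1) := by
  rw [sm9_gauss_integrable_iff, sm9_pdf01]
  have := (integrable_mul_exp_neg_mul_sq (b := 1/2) (by norm_num)).const_mul (Real.sqrt (2*π))⁻¹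
  exact this.congr (ae_of_all _ fun x => by ring)

lemma sm9_gauss_integrable_sq : Integrable (fun x : ℝ => x * x) (gaussianReal 0 1) := by
  rw [sm9_gauss_integrable_iff, sm9_pdf01]
  have h := integrable_rpow_mul_exp_neg_mul_sq (b := 1/2) (by norm_num) (s := 2) (by norm_num)
  simp only [Real.rpow_two] at h
  exact (h.const_mul (Real.sqrt (2*π))⁻¹).congr (ae_of_all _ fun x => by ring)

lemma sm9_gauss_moment_one : ∫ x, x ∂(gaussianReal 0 1) = (0:ℝ) := by
  rw [sm9_gauss_integral_eq, sm9_pdf01]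
  have h : ∫ x : ℝ, x * Real.exp (-(1/2) * x^2) = 0 := by
    have h := integral_neg_eq_self (fun x : ℝ => x * Real.exp (-(1/2) * x^2)) volume
    have e : (fun x : ℝ => (fun y : ℝ => y * Real.exp (-(1/2) * y^2)) (-x))
        = fun x : ℝ => -(x * Real.exp (-(1/2) * x^2)) := by
      funext x; simp only [neg_sq]; ring
    rw [e, integral_neg] at h
    linarith
  calc ∫ x : ℝ, (Real.sqrt (2*π))⁻¹ * Real.exp (-(1/2)*x^2) * x
      = (Real.sqrt (2*π))⁻¹ * ∫ x : ℝ, x * Real.exp (-(1/2)*x^2) := by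
        rw [← integral_const_mul]; congr 1; funext x; ring
    _ = 0 := by rw [h, mul_zero]

lemma sm9_sq_exp_integral :
    ∫ x : ℝ, x * x * Real.exp (-(1/2) * x^2) = Real.sqrt (2*π) := by
  have hv : ∀ x : ℝ, HasDerivAt (fun x : ℝ => -Real.exp (-(1/2)*x^2))
      (x * Real.exp (-(1/2)*x^2)) x := by
    intro x
    have h1 : HasDerivAt (fun x : ℝ => -(1/2:ℝ)*x^2) (-x) x := by
      have := ((hasDerivAt_pow 2 x).const_mul (-(1/2) : ℝ))
      refine this.congr_deriv ?_
      push_cast; ring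
    have := (h1.exp).neg
    refine this.congr_deriv ?_
    ring
  have hint2 : Integrable (fun x : ℝ => Real.exp (-(1/2) * x^2)) :=
    integrable_exp_neg_mul_sq (by norm_num)
  have hrpow := integrable_rpow_mul_exp_neg_mul_sq (b := 1/2) (by norm_num) (s := 2) (by norm_num)
  simp only [Real.rpow_two] at hrpow
  have hint1 : Integrable (fun x : ℝ => x * (x * Real.exp (-(1/2) * x^2))) :=
    hrpow.congr (ae_of_all _ fun x => by ring)
  have hint3 : Integrable (fun x : ℝ => x * Real.exp (-(1/2) * x^2)) :=
    integrable_mul_exp_neg_mul_sq (by norm_num)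
  have key := integral_mul_deriv_eq_deriv_mul_of_integrable
    (u := fun x : ℝ => x) (v := fun x : ℝ => -Real.exp (-(1/2)*x^2))
    (u' := fun _ => (1:ℝ)) (v' := fun x => x * Real.exp (-(1/2)*x^2))
    (fun x _ => hasDerivAt_id x) (fun x _ => hv x)
    (by simpa [Pi.mul_def] using hint1)
    (hint2.neg.congr (ae_of_all _ fun x => by simp only [Pi.mul_apply, Pi.neg_apply]; ring))
    (hint3.neg.congr (ae_of_all _ fun x => by simp only [Pi.mul_apply, Pi.neg_apply]; ring))
  simp only [one_mul] at key
  rw [integral_neg] at key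
  calc ∫ x : ℝ, x * x * Real.exp (-(1/2) * x^2)
      = ∫ x : ℝ, x * (x * Real.exp (-(1/2) * x^2)) := by congr 1; funext x; ring
    _ = Real.sqrt (2*π) := by rw [key, neg_neg, ← sm9_exp_integral]

lemma sm9_gauss_moment_sq : ∫ x, x * x ∂(gaussianReal 0 1) = (1:ℝ) := by
  rw [sm9_gauss_integral_eq, sm9_pdf01]
  calc ∫ x : ℝ, (Real.sqrt (2*π))⁻¹ * Real.exp (-(1/2)*x^2) * (x*x)
      = (Real.sqrt (2*π))⁻¹ * ∫ x : ℝ, x * x * Real.exp (-(1/2)*x^2) := by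
        rw [← integral_const_mul]; congr 1; funext x; ring
    _ = 1 := by rw [sm9_sq_exp_integral]; exact inv_mul_cancel₀ (ne_of_gt sm9_sqrt2pi_pos)

/- ### Moments of the standard Gaussian on `ℝ^m` -/

/-- Auxiliary `MeasureSpace` structure on `ℝ` whose volume is the standard Gaussian. -/
noncomputable def sm9_gMS : MeasureSpace ℝ :=
  { toMeasurableSpace := Real.measurableSpace, volume := gaussianReal 0 1 }

instance sm9_stdGaussian_prob (m : ℕ) : IsProbabilityMeasure (stdGaussian m) := by
  unfold _root_.stdGaussian; infer_instance

lemma sm9_integral_prod_eval {m : ℕ} (f : Fin m → ℝ → ℝ) :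
    ∫ z, ∏ i, f i (z i) ∂stdGaussian m = ∏ i, ∫ x, f i x ∂gaussianReal 0 1 := by
  have := MeasureTheory.integral_fintype_prod_eq_prod (E := fun _ => ℝ) f
    (μ := fun _ => gaussianReal 0 1)
  exact this

lemma sm9_integrable_prod_eval {m : ℕ} {f : Fin m → ℝ → ℝ}
    (hf : ∀ i, Integrable (f i) (gaussianReal 0 1)) :
    Integrable (fun z => ∏ i, f i (z i)) (stdGaussian m) := by
  have := MeasureTheory.Integrable.fintype_prod (μ := fun _ => gaussianReal 0 1) hf
  exact this

lemma sm9_eval_mul_eq_prod {m : ℕ} (p q : Fin m) (z : Fin m → ℝ) :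
    z p * z q = ∏ k, ((if k = p then z k else 1) * (if k = q then z k else 1)) := by
  rw [Finset.prod_mul_distrib, Finset.prod_ite_eq', Finset.prod_ite_eq']
  simp

lemma sm9_eval_eq_prod {m : ℕ} (p : Fin m) (z : Fin m → ℝ) :
    z p = ∏ k, (if k = p then z k else 1) := by
  rw [Finset.prod_ite_eq']; simp

lemma sm9_std_integrable_mul {m : ℕ} (p q : Fin m) :
    Integrable (fun z => z p * z q) (stdGaussian m) := by
  have h := sm9_integrable_prod_eval
    (f := fun k (x : ℝ) => (if k = p then x else 1) * (if k = q then x else 1)) ?_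
  · exact h.congr (ae_of_all _ fun z => by
      simp only []
      exact (sm9_eval_mul_eq_prod p q z).symm)
  · intro k
    by_cases hp : k = p <;> by_cases hq : k = q
    · simp only [if_pos hp, if_pos hq]; exact sm9_gauss_integrable_sq
    · simp only [if_pos hp, if_neg hq, mul_one]; exact sm9_gauss_integrable_id
    · simp only [if_neg hp, if_pos hq, one_mul]; exact sm9_gauss_integrable_id
    · simp only [if_neg hp, if_neg hq, mul_one]; exact integrable_const 1

lemma sm9_std_integrable_eval {m : ℕ} (p : Fin m) :
    Integrable (fun z => z p) (stdGaussian m) := by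
  have h := sm9_integrable_prod_eval (f := fun k (x : ℝ) => if k = p then x else 1) ?_
  · exact h.congr (ae_of_all _ fun z => (sm9_eval_eq_prod p z).symm)
  · intro k
    by_cases hp : k = p
    · simp only [if_pos hp]; exact sm9_gauss_integrable_id
    · simp only [if_neg hp]; exact integrable_const 1

lemma sm9_std_moment_eval {m : ℕ} (p : Fin m) : ∫ z, z p ∂stdGaussian m = 0 := by
  have : (fun z : Fin m → ℝ => z p) = fun z => ∏ k, (if k = p then z k else 1) :=
    funext (sm9_eval_eq_prod p)
  rw [this]
  refine Eq.trans (sm9_integral_prod_eval (fun k (x : ℝ) => if k = p then x else 1)) ?_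
  refine Finset.prod_eq_zero (Finset.mem_univ p) ?_
  simpa using sm9_gauss_moment_one

lemma sm9_std_moment_mul {m : ℕ} (p q : Fin m) :
    ∫ z, z p * z q ∂stdGaussian m = if p = q then 1 else 0 := by
  have : (fun z : Fin m → ℝ => z p * z q)
      = fun z => ∏ k, ((if k = p then z k else 1) * (if k = q then z k else 1)) :=
    funext (sm9_eval_mul_eq_prod p q)
  rw [this]
  refine Eq.trans (sm9_integral_prod_eval
    (fun k (x : ℝ) => (if k = p then x else 1) * (if k = q then x else 1))) ?_
  by_cases hpq : p = q
  · subst hpq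
    rw [if_pos rfl]
    refine Finset.prod_eq_one fun k _ => ?_
    by_cases hk : k = p
    · subst hk
      simpa using sm9_gauss_moment_sq
    · simp [hk]
  · rw [if_neg hpq]
    refine Finset.prod_eq_zero (Finset.mem_univ p) ?_
    simpa [hpq] using sm9_gauss_moment_one

/- ### Quadratic forms under the standard Gaussian -/

lemma sm9_quad_pointwise {m : ℕ} (Q : Matrix (Fin m) (Fin m) ℝ) (z : Fin m → ℝ) :
    z ⬝ᵥ Q.mulVec z = ∑ p, ∑ q, Q p q * (z p * z q) := by
  simp only [dotProduct, Matrix.mulVec, Finset.mul_sum]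
  exact Finset.sum_congr rfl fun p _ => Finset.sum_congr rfl fun q _ => by ring

lemma sm9_std_integrable_quadform {m : ℕ} (Q : Matrix (Fin m) (Fin m) ℝ) :
    Integrable (fun z => z ⬝ᵥ Q.mulVec z) (stdGaussian m) := by
  have : (fun z : Fin m → ℝ => z ⬝ᵥ Q.mulVec z)
      = fun z => ∑ p, ∑ q, Q p q * (z p * z q) := funext (sm9_quad_pointwise Q)
  rw [this]
  exact integrable_finset_sum _ fun p _ =>
    integrable_finset_sum _ fun q _ => (sm9_std_integrable_mul p q).const_mul _

lemma sm9_std_integral_quadform {m : ℕ} (Q : Matrix (Fin m) (Fin m) ℝ) :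
    ∫ z, z ⬝ᵥ Q.mulVec z ∂stdGaussian m = Q.trace := by
  have : (fun z : Fin m → ℝ => z ⬝ᵥ Q.mulVec z)
      = fun z => ∑ p, ∑ q, Q p q * (z p * z q) := funext (sm9_quad_pointwise Q)
  rw [this, integral_finset_sum (f := fun p (z : Fin m → ℝ) => ∑ q, Q p q * (z p * z q)) _ fun p _ =>
    integrable_finset_sum _ fun q _ => (sm9_std_integrable_mul p q).const_mul _]
  have hp : ∀ p : Fin m, ∫ z, ∑ q, Q p q * (z p * z q) ∂stdGaussian m
      = ∑ q, Q p q * (if p = q then 1 else 0) := by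
    intro p
    rw [integral_finset_sum _ fun q _ => (sm9_std_integrable_mul p q).const_mul _]
    exact Finset.sum_congr rfl fun q _ => by rw [integral_const_mul, sm9_std_moment_mul]
  rw [Finset.sum_congr rfl fun p _ => hp p]
  simp [mul_ite, Finset.sum_ite_eq, Matrix.trace, Matrix.diag]

lemma sm9_std_integrable_linear {m : ℕ} (u : Fin m → ℝ) :
    Integrable (fun z => u ⬝ᵥ z) (stdGaussian m) := by
  have : (fun z : Fin m → ℝ => u ⬝ᵥ z) = fun z => ∑ p, u p * z p := rfl
  rw [this]
  exact integrable_finset_sum _ fun p _ => (sm9_std_integrable_eval p).const_mul _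

lemma sm9_std_integral_linear {m : ℕ} (u : Fin m → ℝ) :
    ∫ z, u ⬝ᵥ z ∂stdGaussian m = 0 := by
  have : (fun z : Fin m → ℝ => u ⬝ᵥ z) = fun z => ∑ p, u p * z p := rfl
  rw [this, integral_finset_sum _ fun p _ => (sm9_std_integrable_eval p).const_mul _]
  simp [integral_const_mul, sm9_std_moment_eval]

lemma sm9_shift_pointwise {m d₁ : ℕ} (Υ : Matrix (Fin d₁) (Fin d₁) ℝ)
    (B : Matrix (Fin d₁) (Fin m) ℝ) (c : Fin d₁ → ℝ) (z : Fin m → ℝ) :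
    (B.mulVec z + c) ⬝ᵥ Υ.mulVec (B.mulVec z + c)
      = z ⬝ᵥ (Bᵀ * Υ * B).mulVec z
        + ((Matrix.vecMul (Υ.mulVec c) B) ⬝ᵥ z
          + ((Matrix.vecMul c (Υ * B)) ⬝ᵥ z + c ⬝ᵥ Υ.mulVec c)) := by
  rw [Matrix.mulVec_add, add_dotProduct, dotProduct_add, dotProduct_add]
  have t1 : B.mulVec z ⬝ᵥ Υ.mulVec (B.mulVec z) = z ⬝ᵥ (Bᵀ * Υ * B).mulVec z := by
    rw [Matrix.dotProduct_mulVec z, ← Matrix.vecMul_vecMul, ← Matrix.vecMul_vecMul,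
      Matrix.vecMul_transpose, ← Matrix.dotProduct_mulVec, ← Matrix.dotProduct_mulVec]
  have t2 : B.mulVec z ⬝ᵥ Υ.mulVec c = (Matrix.vecMul (Υ.mulVec c) B) ⬝ᵥ z := by
    rw [dotProduct_comm, Matrix.dotProduct_mulVec]
  have t3 : c ⬝ᵥ Υ.mulVec (B.mulVec z) = (Matrix.vecMul c (Υ * B)) ⬝ᵥ z := by
    rw [Matrix.mulVec_mulVec, Matrix.dotProduct_mulVec]
  rw [t1, t2, t3]
  ring

lemma sm9_std_integral_quad_shift {m d₁ : ℕ} (Υ : Matrix (Fin d₁) (Fin d₁) ℝ)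
    (B : Matrix (Fin d₁) (Fin m) ℝ) (c : Fin d₁ → ℝ) :
    ∫ z, (B.mulVec z + c) ⬝ᵥ Υ.mulVec (B.mulVec z + c) ∂stdGaussian m
      = (Bᵀ * Υ * B).trace + c ⬝ᵥ Υ.mulVec c := by
  have : (fun z : Fin m → ℝ => (B.mulVec z + c) ⬝ᵥ Υ.mulVec (B.mulVec z + c))
      = fun z => z ⬝ᵥ (Bᵀ * Υ * B).mulVec z
        + ((Matrix.vecMul (Υ.mulVec c) B) ⬝ᵥ z
          + ((Matrix.vecMul c (Υ * B)) ⬝ᵥ z + c ⬝ᵥ Υ.mulVec c)) :=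
    funext (sm9_shift_pointwise Υ B c)
  rw [this]
  have i2 : Integrable
      (fun z : Fin m → ℝ => (Matrix.vecMul c (Υ * B)) ⬝ᵥ z + c ⬝ᵥ Υ.mulVec c)
      (stdGaussian m) := (sm9_std_integrable_linear _).add (integrable_const _)
  have i1 : Integrable
      (fun z : Fin m → ℝ => (Matrix.vecMul (Υ.mulVec c) B) ⬝ᵥ z
        + ((Matrix.vecMul c (Υ * B)) ⬝ᵥ z + c ⬝ᵥ Υ.mulVec c))
      (stdGaussian m) := (sm9_std_integrable_linear _).add i2
  have e1 := integral_add (μ := stdGaussian m)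
    (sm9_std_integrable_quadform (Bᵀ * Υ * B)) i1
  have e2 := integral_add (μ := stdGaussian m)
    (sm9_std_integrable_linear (Matrix.vecMul (Υ.mulVec c) B)) i2
  have e3 := integral_add (μ := stdGaussian m)
    (sm9_std_integrable_linear (Matrix.vecMul c (Υ * B)))
    (integrable_const (c ⬝ᵥ Υ.mulVec c))
  rw [e1, e2, e3, sm9_std_integral_quadform, sm9_std_integral_linear,
    sm9_std_integral_linear, integral_const]
  simp

/- ### Measurability of the integrand -/

lemma sm9_measurable_affine {m k : ℕ} (N : Matrix (Fin k) (Fin m) ℝ) (t : Fin m → ℝ)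
    (i : Fin k) : Measurable (fun x : Fin m → ℝ => N.mulVec (x + t) i) := by
  have : (fun x : Fin m → ℝ => N.mulVec (x + t) i)
      = fun x => ∑ j, N i j * (x j + t j) := rfl
  rw [this]
  exact Finset.measurable_sum _ fun j _ => by fun_prop

lemma sm9_measurable_mulVec {m : ℕ} (A : Matrix (Fin m) (Fin m) ℝ) :
    Measurable (fun x : Fin m → ℝ => A.mulVec x) := by
  refine measurable_pi_lambda _ fun i => ?_
  have : (fun x : Fin m → ℝ => A.mulVec x i) = fun x => ∑ j, A i j * x j := rfl
  rw [this]
  exact Finset.measurable_sum _ fun j _ => by fun_prop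

lemma sm9_measurable_F {m d₁ : ℕ} (N₁ N₂ : Matrix (Fin d₁) (Fin m) ℝ)
    (Υ : Matrix (Fin d₁) (Fin d₁) ℝ) (τ : Fin m → ℝ) (w : ℝ) :
    Measurable (fun x : Fin m → ℝ =>
      (N₁.mulVec (x + τ) - w • N₂.mulVec (x + τ))
        ⬝ᵥ Υ.mulVec (N₁.mulVec (x + τ) - w • N₂.mulVec (x + τ))) := by
  have hu : ∀ i, Measurable
      (fun x : Fin m → ℝ => (N₁.mulVec (x + τ) - w • N₂.mulVec (x + τ)) i) := by
    intro i
    have h := (sm9_measurable_affine N₁ τ i).sub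
      ((sm9_measurable_affine N₂ τ i).const_mul w)
    have e : (fun x : Fin m → ℝ => (N₁.mulVec (x + τ) - w • N₂.mulVec (x + τ)) i)
        = fun x => N₁.mulVec (x + τ) i - w * N₂.mulVec (x + τ) i := by
      funext x; simp [Pi.smul_apply, smul_eq_mul]
    rw [e]; exact h
  have e : (fun x : Fin m → ℝ =>
      (N₁.mulVec (x + τ) - w • N₂.mulVec (x + τ))
        ⬝ᵥ Υ.mulVec (N₁.mulVec (x + τ) - w • N₂.mulVec (x + τ)))
      = fun x => ∑ i, (N₁.mulVec (x + τ) - w • N₂.mulVec (x + τ)) i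
          * ∑ j, Υ i j * (N₁.mulVec (x + τ) - w • N₂.mulVec (x + τ)) j := rfl
  rw [e]
  exact Finset.measurable_sum _ fun i _ =>
    (hu i).mul (Finset.measurable_sum _ fun j _ => (hu j).const_mul (Υ i j))

end Auxiliary

/-- Lemma 2 of the paper (Gaussian-limit form): the optimal mixing weight for the
linear-pool semi-modular posterior. With `a = tr(ΥM)` and `b = τᵀPτ`, if `a > 0`
the risk over `[0,1]` is uniquely minimized at `ω* = a/(a+b) ∈ (0,1]`; if `a ≤ 0`
it is minimized at `0`. -/
theorem stmt_9 {m d₁ : ℕ}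
    (Ω : Matrix (Fin m) (Fin m) ℝ) (hΩ : Ω.PosSemidef)
    (μ : Measure (Fin m → ℝ)) (hμ : IsGaussianLaw μ 0 Ω)
    (τ : Fin m → ℝ)
    (Γ₁ Γ : Matrix (Fin d₁) (Fin m) ℝ) (hΓ₁τ : Γ₁.mulVec τ = 0)
    (Υ : Matrix (Fin d₁) (Fin d₁) ℝ) (hΥ : Υ.PosDef) (hΥsymm : Υ.IsSymm)
    (M : Matrix (Fin d₁) (Fin d₁) ℝ) (hMdef : M = (Γ₁ - Γ) * Ω * (Γ₁ - Γ)ᵀ)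
    (hMcross : Γ₁ * Ω * (Γ₁ - Γ)ᵀ = M)
    (P : Matrix (Fin m) (Fin m) ℝ) (hPdef : P = (Γ₁ - Γ)ᵀ * Υ * (Γ₁ - Γ))
    :
    ∀ R : ℝ → ℝ,
      R = (fun w =>
        ∫ x, (Γ₁.mulVec (x + τ) - w • (Γ₁ - Γ).mulVec (x + τ))
              ⬝ᵥ Υ.mulVec (Γ₁.mulVec (x + τ) - w • (Γ₁ - Γ).mulVec (x + τ)) ∂μ) →
      ((0 < (Υ * M).trace →
        ((Υ * M).trace / ((Υ * M).trace + τ ⬝ᵥ P.mulVec τ) ∈ Set.Ioc (0 : ℝ) 1 ∧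
          ∀ w ∈ Set.Icc (0 : ℝ) 1,
            w ≠ (Υ * M).trace / ((Υ * M).trace + τ ⬝ᵥ P.mulVec τ) →
            R ((Υ * M).trace / ((Υ * M).trace + τ ⬝ᵥ P.mulVec τ)) < R w)) ∧
      ((Υ * M).trace ≤ 0 → ∀ w ∈ Set.Icc (0 : ℝ) 1, R 0 ≤ R w)) := by
  intro R hR
  obtain ⟨A, hA, hmap⟩ := hμ
  simp only [zero_add] at hmap
  obtain ⟨D, hDD⟩ : ∃ D, Γ₁ - Γ = D := ⟨_, rfl⟩
  rw [hDD] at hMdef hMcross hPdef hR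
  set a : ℝ := (Υ * M).trace with ha
  set b : ℝ := τ ⬝ᵥ P.mulVec τ with hb
  -- basic symmetry facts
  have hΩt : Ωᵀ = Ω := by
    rw [← Matrix.conjTranspose_eq_transpose_of_trivial]; exact hΩ.1
  have hMt : Mᵀ = M := by
    rw [hMdef, Matrix.transpose_mul, Matrix.transpose_mul, Matrix.transpose_transpose, hΩt,
      Matrix.mul_assoc]
  -- b is nonnegative
  have hb0 : 0 ≤ b := by
    have h1 : τ ⬝ᵥ P.mulVec τ
        = (D.mulVec τ) ⬝ᵥ Υ.mulVec (D.mulVec τ) := by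
      rw [hPdef, Matrix.dotProduct_mulVec τ, ← Matrix.vecMul_vecMul, ← Matrix.vecMul_vecMul,
        Matrix.vecMul_transpose, ← Matrix.dotProduct_mulVec, ← Matrix.dotProduct_mulVec]
    have h2 := hΥ.posSemidef.dotProduct_mulVec_nonneg (D.mulVec τ)
    simpa [hb, h1] using h2
  -- the closed form of R
  have hRw : ∀ w : ℝ, R w = (Γ₁ᵀ * Υ * Γ₁ * Ω).trace - 2*a*w + (a+b)*w^2 := by
    intro w
    have hmeas : Measurable (fun x : Fin m → ℝ =>
        (Γ₁.mulVec (x + τ) - w • D.mulVec (x + τ))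
          ⬝ᵥ Υ.mulVec (Γ₁.mulVec (x + τ) - w • D.mulVec (x + τ))) :=
      sm9_measurable_F Γ₁ D Υ τ w
    have h1 : R w = ∫ z, (Γ₁.mulVec (A.mulVec z + τ) - w • D.mulVec (A.mulVec z + τ))
        ⬝ᵥ Υ.mulVec (Γ₁.mulVec (A.mulVec z + τ) - w • D.mulVec (A.mulVec z + τ))
        ∂stdGaussian m := by
      rw [hR]
      simp only []
      rw [hmap, integral_map (sm9_measurable_mulVec A).aemeasurable
        hmeas.aestronglyMeasurable]
    -- rewrite the integrand in shifted-quadratic form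
    have hvec : ∀ z : Fin m → ℝ,
        Γ₁.mulVec (A.mulVec z + τ) - w • D.mulVec (A.mulVec z + τ)
          = ((Γ₁ - w • D) * A).mulVec z + ((-w) • (D.mulVec τ)) := by
      intro z
      simp only [Matrix.mulVec_add, hΓ₁τ, Matrix.sub_mul, Matrix.sub_mulVec,
        Matrix.smul_mul, Matrix.smul_mulVec, Matrix.mulVec_mulVec, smul_add, smul_sub,
        neg_smul, add_zero, smul_zero]
      module
    have h2 : R w = (((Γ₁ - w • D) * A)ᵀ * Υ * ((Γ₁ - w • D) * A)).trace
        + ((-w) • (D.mulVec τ)) ⬝ᵥ Υ.mulVec ((-w) • (D.mulVec τ)) := by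
      rw [h1]
      rw [show (fun z : Fin m → ℝ =>
        (Γ₁.mulVec (A.mulVec z + τ) - w • D.mulVec (A.mulVec z + τ))
          ⬝ᵥ Υ.mulVec (Γ₁.mulVec (A.mulVec z + τ) - w • D.mulVec (A.mulVec z + τ)))
        = fun z => (((Γ₁ - w • D) * A).mulVec z + ((-w) • (D.mulVec τ)))
          ⬝ᵥ Υ.mulVec (((Γ₁ - w • D) * A).mulVec z + ((-w) • (D.mulVec τ)))
        from funext fun z => by rw [hvec z]]
      exact sm9_std_integral_quad_shift Υ _ _
    -- trace part
    have key : ∀ X : Matrix (Fin d₁) (Fin m) ℝ,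
        ((X * A)ᵀ * Υ * (X * A)).trace = (Xᵀ * (Υ * (X * Ω))).trace := by
      intro X
      rw [Matrix.transpose_mul, ← hA]
      simp only [Matrix.mul_assoc]
      rw [Matrix.trace_mul_comm]
      simp only [Matrix.mul_assoc]
    have ha1 : (Dᵀ * (Υ * (Γ₁ * Ω))).trace = a := by
      rw [Matrix.trace_mul_comm, ha]
      congr 1
      rw [Matrix.mul_assoc, hMcross]
    have ha2 : (Γ₁ᵀ * (Υ * (D * Ω))).trace = a := by
      rw [Matrix.trace_mul_comm, ha]
      congr 1
      rw [Matrix.mul_assoc]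
      rw [show D * Ω * Γ₁ᵀ = Mᵀ by
        rw [← hMcross, Matrix.transpose_mul, Matrix.transpose_mul,
          Matrix.transpose_transpose, hΩt, Matrix.mul_assoc], hMt]
    have ha3 : (Dᵀ * (Υ * (D * Ω))).trace = a := by
      rw [Matrix.trace_mul_comm, ha]
      congr 1
      rw [Matrix.mul_assoc, ← hMdef]
    have htr : (((Γ₁ - w • D) * A)ᵀ * Υ * ((Γ₁ - w • D) * A)).trace
        = (Γ₁ᵀ * Υ * Γ₁ * Ω).trace - 2*a*w + a*w^2 := by
      rw [key]
      simp only [Matrix.transpose_sub, Matrix.transpose_smul, Matrix.sub_mul, Matrix.mul_sub,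
        Matrix.smul_mul, Matrix.mul_smul, Matrix.trace_sub, Matrix.trace_smul, smul_smul,
        smul_eq_mul]
      rw [ha1, ha2, ha3]
      rw [show (Γ₁ᵀ * (Υ * (Γ₁ * Ω))).trace = (Γ₁ᵀ * Υ * Γ₁ * Ω).trace by
        simp only [Matrix.mul_assoc]]
      ring
    -- constant vector part
    have hc : ((-w) • (D.mulVec τ)) ⬝ᵥ Υ.mulVec ((-w) • (D.mulVec τ))
        = b * w^2 := by
      rw [hb]
      have h1 : τ ⬝ᵥ P.mulVec τ
          = (D.mulVec τ) ⬝ᵥ Υ.mulVec (D.mulVec τ) := by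
        rw [hPdef, Matrix.dotProduct_mulVec τ, ← Matrix.vecMul_vecMul, ← Matrix.vecMul_vecMul,
          Matrix.vecMul_transpose, ← Matrix.dotProduct_mulVec, ← Matrix.dotProduct_mulVec]
      rw [h1, smul_dotProduct, Matrix.mulVec_smul, dotProduct_smul]
      simp only [smul_eq_mul]
      ring
    rw [h2, htr, hc]
    ring
  constructor
  · -- case 0 < a
    intro hapos
    have hab : 0 < a + b := by linarith
    have hmem : a / (a + b) ∈ Set.Ioc (0:ℝ) 1 := by
      constructor
      · exact div_pos hapos hab
      · rw [div_le_one hab]; linarith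
    refine ⟨hmem, ?_⟩
    intro w hw hne
    rw [hRw, hRw]
    have hx : w - a/(a+b) ≠ 0 := sub_ne_zero.2 hne
    have hsq : 0 < (w - a/(a+b))^2 := by positivity
    have h1 : a/(a+b)*(a+b) = a := div_mul_cancel₀ a (ne_of_gt hab)
    have h2 : a/(a+b)*(a/(a+b))*(a+b) = a/(a+b)*a := by rw [mul_assoc, h1]
    have h3 : w*(a/(a+b)*(a+b)) = w*a := by rw [h1]
    nlinarith [mul_pos hab hsq, h1, h2, h3]
  · -- case a ≤ 0
    intro haneg w hw
    rw [hRw, hRw]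
    rcases hw with ⟨hw0, hw1⟩
    nlinarith [sq_nonneg w, mul_nonneg hb0 (sq_nonneg w), mul_nonneg hw0 (neg_nonneg.2 haneg)]
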